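/- Assume condition (SP_v): for every E ∈ ℝ the operator h_S + v_S(E,v) − E on ℓ²(S) is invertible. Then the coupled one-particle Hamiltonian h_v has no eigenvalues: for every E ∈ ℝ and every ψ ∈ 𝔥, h_v ψ = Eψ implies ψ = 0. -/

import Mathlib

noncomputable section
open Complex Filter MeasureTheory
open scoped ENNReal

/-- The Hilbert space `⊕_{j=1}^m ℓ²(ℕ)` of the leads, realized as `ℓ²(Fin m × ℕ)`. -/
abbrev LeadSp (m : ℕ) : Type := lp (fun _ : Fin m × ℕ => ℂ) 2

/-- The Hilbert space `ℓ²(S)` of the finite sample. -/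
abbrev SampSp (S : Type) [Fintype S] : Type := EuclideanSpace ℂ S

/-- The full one-particle Hilbert space `𝔥 = ℓ²(S) ⊕ 𝔥_R`. -/
abbrev FullSp (S : Type) [Fintype S] (m : ℕ) : Type := WithLp 2 (SampSp S × LeadSp m)

/-- Embedding of a pair into the full space. -/
def emb {S : Type} [Fintype S] {m : ℕ} (p : SampSp S × LeadSp m) : FullSp S m :=
  (WithLp.equiv 2 (SampSp S × LeadSp m)).symm p

/-- Projection of the full space onto the sample component. -/
def prjS {S : Type} [Fintype S] {m : ℕ} (x : FullSp S m) : SampSp S :=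
  ((WithLp.equiv 2 (SampSp S × LeadSp m)) x).1

/-- Projection of the full space onto the reservoir component. -/
def prjR {S : Type} [Fintype S] {m : ℕ} (x : FullSp S m) : LeadSp m :=
  ((WithLp.equiv 2 (SampSp S × LeadSp m)) x).2

/-- Kronecker delta at site `x` of lead `j`. -/
def deltaR {m : ℕ} (j : Fin m) (x : ℕ) : LeadSp m := lp.single 2 (j, x) (1 : ℂ)

/-- The set of thresholds `𝒯 = {v_j ± 2 c_R}`. -/
def thresholds {m : ℕ} (v : Fin m → ℝ) (cR : ℝ) : Set ℝ :=
  {E : ℝ | ∃ j : Fin m, E = v j + 2 * cR ∨ E = v j - 2 * cR}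

/-- conserved quantity argument: in-band solutions tending to 0 vanish. -/
lemma band_zero (lam : ℝ) (hlam : |lam| ≤ 2) (u : ℕ → ℂ)
    (hrec : ∀ x, u x + u (x+2) = (lam : ℂ) * u (x+1))
    (h0 : Tendsto u atTop (nhds 0)) : ∀ x, u x = 0 := by
  set Q : ℕ → ℝ := fun x => normSq (u (x+1)) + normSq (u x)
      - lam * (u (x+1) * (starRingEnd ℂ) (u x)).re with hQ
  have hstep : ∀ x, Q (x+1) = Q x := by
    intro x
    have h2 : u (x+2) = (lam:ℂ) * u (x+1) - u x := by
      have := hrec x; linear_combination this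
    simp only [hQ, h2]
    simp only [Complex.normSq_apply, Complex.mul_re, Complex.sub_re, Complex.sub_im,
      Complex.mul_im, Complex.conj_re, Complex.conj_im, Complex.ofReal_re, Complex.ofReal_im]
    ring
  have hconst : ∀ x, Q x = Q 0 := by
    intro x; induction x with
    | zero => rfl
    | succ n ih => rw [hstep n, ih]
  have hQ0 : Tendsto Q atTop (nhds 0) := by
    have h1 : Tendsto (fun x => u (x+1)) atTop (nhds 0) :=
      h0.comp (tendsto_add_atTop_nat 1)
    have hc : Tendsto (fun x => normSq (u (x+1)) + normSq (u x)
        - lam * (u (x+1) * (starRingEnd ℂ) (u x)).re) atTop (nhds (normSq 0 + normSq 0 - lam * ((0:ℂ) * (starRingEnd ℂ) 0).re)) := by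
      exact (((Complex.continuous_normSq.tendsto 0).comp h1).add
        ((Complex.continuous_normSq.tendsto 0).comp h0)).sub
        (tendsto_const_nhds.mul (Complex.continuous_re.tendsto _ |>.comp
          ((h1.mul (Complex.continuous_conj.tendsto 0 |>.comp h0)))))
    have hv : (0:ℝ) = normSq 0 + normSq 0 - lam * ((0:ℂ) * (starRingEnd ℂ) 0).re := by simp
    rw [hQ, hv]; exact hc
  have hQzero : Q 0 = 0 := by
    have h : Tendsto (fun _ : ℕ => Q 0) atTop (nhds 0) := by
      have := hQ0
      rwa [show Q = fun _ => Q 0 from funext hconst] at this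
    exact (tendsto_nhds_unique h tendsto_const_nhds).symm
  have habs : ∀ x, ‖u (x+1)‖ = ‖u x‖ := by
    intro x
    have hx : Q x = 0 := by rw [hconst x, hQzero]
    have hre : (u (x+1) * (starRingEnd ℂ) (u x)).re ≤ ‖u (x+1)‖ * ‖u x‖ := by
      calc (u (x+1) * (starRingEnd ℂ) (u x)).re ≤ ‖u (x+1) * (starRingEnd ℂ) (u x)‖ := Complex.re_le_norm _
        _ = ‖u (x+1)‖ * ‖u x‖ := by
            rw [norm_mul, Complex.norm_conj]
    have hb : lam * (u (x+1) * (starRingEnd ℂ) (u x)).re ≤ 2 * (‖u (x+1)‖ * ‖u x‖) := by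
      calc lam * (u (x+1) * (starRingEnd ℂ) (u x)).re ≤ |lam * (u (x+1) * (starRingEnd ℂ) (u x)).re| := le_abs_self _
        _ = |lam| * |(u (x+1) * (starRingEnd ℂ) (u x)).re| := abs_mul _ _
        _ ≤ 2 * (‖u (x+1)‖ * ‖u x‖) := by
            apply mul_le_mul hlam ?_ (abs_nonneg _) (by norm_num)
            calc |(u (x+1) * (starRingEnd ℂ) (u x)).re| ≤ ‖u (x+1) * (starRingEnd ℂ) (u x)‖ := Complex.abs_re_le_norm _
              _ = _ := by rw [norm_mul, Complex.norm_conj]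
    have hsq : normSq (u (x+1)) + normSq (u x) ≤ 2 * (‖u (x+1)‖ * ‖u x‖) := by
      have : normSq (u (x+1)) + normSq (u x) = lam * (u (x+1) * (starRingEnd ℂ) (u x)).re := by
        have := hx; simp only [hQ] at this; linarith
      linarith
    have hns1 : normSq (u (x+1)) = ‖u (x+1)‖^2 := (Complex.sq_norm _).symm
    have hns0 : normSq (u x) = ‖u x‖^2 := (Complex.sq_norm _).symm
    nlinarith [sq_nonneg (‖u (x+1)‖ - ‖u x‖)]
  have habs0 : ∀ x, ‖u x‖ = ‖u 0‖ := by
    intro x; induction x with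
    | zero => rfl
    | succ n ih => rw [habs n, ih]
  have : Tendsto (fun x => ‖u x‖) atTop (nhds 0) := by
    simpa [Function.comp_def] using (continuous_norm.tendsto 0).comp h0
  have h00 : ‖u 0‖ = 0 := by
    refine tendsto_nhds_unique ?_ this
    · simp only [habs0]; exact tendsto_const_nhds
  intro x
  have := habs0 x
  rw [h00] at this
  exact norm_eq_zero.mp this

/-- off-band: solution tending to zero is a geometric sequence. -/
lemma geom_of_tendsto (r s : ℂ) (h1 : r * s = 1) (hs : 1 < ‖s‖) (u : ℕ → ℂ)
    (hrec : ∀ x, u x + u (x+2) = (r + s) * u (x+1))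
    (h0 : Tendsto u atTop (nhds 0)) : ∀ x, u (x+1) = r * u x := by
  set w : ℕ → ℂ := fun x => u (x+1) - r * u x with hw
  have hstep : ∀ x, w (x+1) = s * w x := by
    intro x
    have h2 : u (x+2) = (r+s) * u (x+1) - u x := by linear_combination hrec x
    simp only [hw, h2]
    linear_combination (u x) * h1
  have hgeom : ∀ x, w x = s ^ x * w 0 := by
    intro x; induction x with
    | zero => simp
    | succ n ih => rw [hstep n, ih]; ring
  have hw0 : Tendsto w atTop (nhds 0) := by
    have h1' : Tendsto (fun x => u (x+1)) atTop (nhds 0) := h0.comp (tendsto_add_atTop_nat 1)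
    have := h1'.sub (h0.const_mul r)
    simpa using this
  have hz : w 0 = 0 := by
    by_contra hne
    have hlb : ∀ x, ‖w 0‖ ≤ ‖w x‖ := by
      intro x
      rw [hgeom x, norm_mul, norm_pow]
      have h1s : (1:ℝ) ≤ ‖s‖ ^ x := one_le_pow₀ (le_of_lt hs)
      nlinarith [norm_nonneg (w 0), norm_nonneg (w x)]
    have hpos : 0 < ‖w 0‖ := by
      simpa [norm_pos_iff] using hne
    have : ∀ᶠ x in atTop, ‖w x‖ < ‖w 0‖ := by
      have habs : Tendsto (fun x => ‖w x‖) atTop (nhds 0) := by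
        simpa [Function.comp_def] using (continuous_norm.tendsto 0).comp hw0
      exact habs.eventually_lt_const hpos
    obtain ⟨x, hx⟩ := this.exists
    exact absurd (hlb x) (not_le.mpr hx)
  intro x
  have h := hgeom x
  rw [hz, mul_zero] at h
  have h' : u (x+1) - r * u x = 0 := h
  linear_combination h'

/-- existence of a root of `r² - μr + 1` with modulus < 1, for non-real `μ`. -/
lemma exists_small_root (mu : ℂ) (hmu : mu.im ≠ 0) :
    ∃ r : ℂ, r * r - mu * r + 1 = 0 ∧ ‖r‖ < 1 := by
  obtain ⟨s, hs⟩ := Complex.isAlgClosed.exists_pow_nat_eq (mu^2 - 4) (by norm_num : 0 < 2)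
  set r1 := (mu + s)/2
  set r2 := (mu - s)/2
  have hprod : r1 * r2 = 1 := by
    field_simp [r1, r2]
    linear_combination -hs/4
  have hsum : r1 + r2 = mu := by simp only [r1, r2]; ring
  have hroot : ∀ r, r = r1 ∨ r = r2 → r * r - mu * r + 1 = 0 := by
    rintro r (rfl | rfl) <;> rw [← hsum, ← hprod] <;> ring
  by_cases h1 : ‖r1‖ < 1
  · exact ⟨r1, hroot r1 (Or.inl rfl), h1⟩
  by_cases h2 : ‖r2‖ < 1
  · exact ⟨r2, hroot r2 (Or.inr rfl), h2⟩
  exfalso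
  push_neg at h1 h2
  have habs : ‖r1‖ * ‖r2‖ = 1 := by
    rw [← norm_mul, hprod, norm_one]
  have hb1 : ‖r1‖ = 1 := by nlinarith
  have hb2 : ‖r2‖ = 1 := by nlinarith
  have hr1ne : r1 ≠ 0 := by
    intro h; rw [h] at hb1; simp at hb1
  have hconj : r2 = (starRingEnd ℂ) r1 := by
    have hm : r1 * (starRingEnd ℂ) r1 = 1 := by
      rw [Complex.mul_conj]
      norm_cast
      rw [← Complex.sq_norm, hb1]; norm_num
    have := hprod.trans hm.symm
    exact mul_left_cancel₀ hr1ne this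
  apply hmu
  rw [← hsum, Complex.add_im, hconj, Complex.conj_im]
  ring

/-- real roots of `r² - λr + 1` when `|λ| > 2`. -/
lemma exists_real_roots (lam : ℝ) (hlam : 2 < |lam|) :
    ∃ p q : ℝ, p + q = lam ∧ p * q = 1 ∧ 1 < |q| := by
  have hd : 0 ≤ lam^2 - 4 := by nlinarith [_root_.sq_abs lam, sq_nonneg (|lam| - 2)]
  have hsq := Real.sq_sqrt hd
  set t := Real.sqrt (lam^2 - 4) with ht
  have htnn : 0 ≤ t := Real.sqrt_nonneg _
  rcases lt_or_gt_of_ne (show lam ≠ 0 by intro h; rw [h] at hlam; norm_num at hlam) with hneg | hpos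
  · -- lam < 0, so lam < -2
    have hl2 : lam < -2 := by
      rcases abs_cases lam with ⟨h, _⟩ | ⟨h, _⟩ <;> [linarith; linarith]
    refine ⟨(lam + t)/2, (lam - t)/2, by ring, ?_, ?_⟩
    · rw [div_mul_div_comm]
      rw [show (lam + t) * (lam - t) = lam^2 - t^2 by ring, hsq]
      norm_num
    · rw [abs_of_neg (by nlinarith)]
      nlinarith
  · have hl2 : 2 < lam := by
      rcases abs_cases lam with ⟨h, _⟩ | ⟨h, _⟩ <;> [linarith; linarith]
    refine ⟨(lam - t)/2, (lam + t)/2, by ring, ?_, ?_⟩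
    · rw [div_mul_div_comm]
      rw [show (lam - t) * (lam + t) = lam^2 - t^2 by ring, hsq]
      norm_num
    · rw [abs_of_pos (by nlinarith)]
      nlinarith

/-- quantitative closeness of small roots. -/
lemma small_root_close (lam : ℝ) (p q : ℝ) (hpq : p + q = lam) (hprod : p * q = 1)
    (hq : 1 < |q|) (mu r : ℂ) (hr : r * r - mu * r + 1 = 0) (hrabs : ‖r‖ < 1) :
    ‖r - (p:ℂ)‖ ≤ ‖mu - (lam:ℂ)‖ / (|q| - 1) := by
  have key : (r - (p:ℂ)) * (r - (q:ℂ)) = (mu - (lam:ℂ)) * r := by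
    have hpq' : (p:ℂ) + q = (lam:ℂ) := by norm_cast
    have hprod' : (p:ℂ) * q = 1 := by norm_cast
    linear_combination hr + hprod' - r * hpq'
  have h1 : ‖r - (p:ℂ)‖ * ‖r - (q:ℂ)‖ = ‖mu - (lam:ℂ)‖ * ‖r‖ := by
    rw [← norm_mul, key, norm_mul]
  have h2 : |q| - 1 ≤ ‖r - (q:ℂ)‖ := by
    have h := norm_sub_norm_le (q:ℂ) r
    rw [norm_sub_rev] at h
    simp only [Complex.norm_real, Real.norm_eq_abs] at h
    linarith
  have hposq : 0 < |q| - 1 := by linarith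
  have h3 : ‖r - (p:ℂ)‖ * (|q| - 1) ≤ ‖mu - (lam:ℂ)‖ := by
    calc ‖r - (p:ℂ)‖ * (|q| - 1) ≤ ‖r - (p:ℂ)‖ * ‖r - (q:ℂ)‖ := by
          exact mul_le_mul_of_nonneg_left h2 (norm_nonneg _)
      _ = ‖mu - (lam:ℂ)‖ * ‖r‖ := h1
      _ ≤ ‖mu - (lam:ℂ)‖ * 1 := by
          exact mul_le_mul_of_nonneg_left (le_of_lt hrabs) (norm_nonneg _)
      _ = _ := mul_one _
  rw [le_div_iff₀ hposq]
  exact h3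


/-- a chosen root of `r² - μ r + 1 = 0` with `|r| < 1` (junk value if `μ` is real). -/
def smallRoot (mu : ℂ) : ℂ :=
  if h : mu.im ≠ 0 then (exists_small_root mu h).choose else 0

lemma smallRoot_spec (mu : ℂ) (h : mu.im ≠ 0) :
    smallRoot mu * smallRoot mu - mu * smallRoot mu + 1 = 0 ∧ ‖smallRoot mu‖ < 1 := by
  rw [smallRoot, dif_pos h]
  exact (exists_small_root mu h).choose_spec

def leadVecFun (m : ℕ) (k : Fin m) (r : ℂ) (c : ℝ) : (Fin m × ℕ) → ℂ :=
  fun i => if i.1 = k then r ^ (i.2 + 1) / (c:ℂ) else 0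

lemma leadVec_mem (m : ℕ) (k : Fin m) (r : ℂ) (c : ℝ) (hr : ‖r‖ < 1) :
    Memℓp (leadVecFun m k r c) 2 := by
  apply memℓp_gen
  have h2 : (2:ℝ≥0∞).toReal = 2 := by norm_num
  rw [h2]
  have hnn : 0 ≤ fun i : Fin m × ℕ => ‖leadVecFun m k r c i‖ ^ (2:ℝ) := by
    intro i; positivity
  refine (summable_prod_of_nonneg hnn).mpr ⟨fun j => ?_, Summable.of_finite⟩
  by_cases hj : j = k
  · subst hj
    have hgeom : Summable fun x : ℕ => (‖r‖ ^ 2) ^ x * (‖r‖ ^ 2 / ‖(c:ℂ)‖ ^ 2) := by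
      apply Summable.mul_right
      exact summable_geometric_of_lt_one (by positivity) (by
        nlinarith [norm_nonneg r])
    apply hgeom.congr
    intro x
    simp only [leadVecFun, if_true, eq_self_iff_true]
    rw [norm_div, norm_pow,
      show (2:ℝ) = ((2:ℕ):ℝ) by norm_num, Real.rpow_natCast, div_pow]
    ring
  · have : (fun y => ‖leadVecFun m k r c (j, y)‖ ^ (2:ℝ)) = fun _ => 0 := by
      funext y
      simp [leadVecFun, hj]
    rw [this]
    exact summable_zero

def leadVec (m : ℕ) (k : Fin m) (r : ℂ) (c : ℝ) (hr : ‖r‖ < 1) : LeadSp m :=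
  ⟨leadVecFun m k r c, leadVec_mem m k r c hr⟩

lemma leadVec_apply (m : ℕ) (k : Fin m) (r : ℂ) (c : ℝ) (hr : ‖r‖ < 1)
    (i : Fin m × ℕ) : (leadVec m k r c hr) i = if i.1 = k then r ^ (i.2 + 1) / (c:ℂ) else 0 := rfl


set_option maxHeartbeats 2000000 in
/-- under the spectral condition (SP_v), the coupled one-particle Hamiltonian
`h_v` has no eigenvalues. -/
theorem coupled_hamiltonian_no_eigenvalues
    {S : Type} [Fintype S] [DecidableEq S] [Nonempty S]
    (m : ℕ) (hm : 0 < m)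
    (cR : ℝ) (hcR : 0 < cR)
    (hS : SampSp S →L[ℂ] SampSp S) (hSsa : IsSelfAdjoint hS)
    (hR : LeadSp m →L[ℂ] LeadSp m)
    (hR0 : ∀ (ψ : LeadSp m) (j : Fin m), (hR ψ) (j, 0) = -(cR : ℂ) * ψ (j, 1))
    (hR1 : ∀ (ψ : LeadSp m) (j : Fin m) (x : ℕ),
      (hR ψ) (j, x + 1) = -(cR : ℂ) * (ψ (j, x) + ψ (j, x + 2)))
    (φ : Fin m → SampSp S) (hφ : ∀ j, ‖φ j‖ = 1)
    (d : Fin m → ℝ) (v : Fin m → ℝ)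
    (vR : LeadSp m →L[ℂ] LeadSp m)
    (hvR : ∀ (ψ : LeadSp m) (j : Fin m) (x : ℕ), (vR ψ) (j, x) = (v j : ℂ) * ψ (j, x))
    (hT : FullSp S m →L[ℂ] FullSp S m)
    (hhT : ∀ (a : SampSp S) (b : LeadSp m),
      hT (emb (a, b)) = emb
        (∑ j : Fin m, (d j : ℂ) • (b (j, 0) • φ j),
         ∑ j : Fin m, (d j : ℂ) • ((inner ℂ (φ j) a : ℂ) • deltaR j 0)))
    (hD : FullSp S m →L[ℂ] FullSp S m)
    (hhD : ∀ (a : SampSp S) (b : LeadSp m), hD (emb (a, b)) = emb (hS a, (hR + vR) b))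
    (hv : FullSp S m →L[ℂ] FullSp S m) (hhv : hv = hD + hT)
    (RR : ℂ → (LeadSp m →L[ℂ] LeadSp m))
    (hRR : ∀ z : ℂ, z.im ≠ 0 →
      ((hR + vR) - z • 1) * RR z = 1 ∧ RR z * ((hR + vR) - z • 1) = 1)
    (cmp : ℂ → (SampSp S →L[ℂ] SampSp S))
    (hcmp : ∀ z : ℂ, z.im ≠ 0 → ∀ f : SampSp S,
      cmp z f = prjS (hT (emb (0, RR z (prjR (hT (emb (f, 0))))))))
    (vS : ℝ → (SampSp S →L[ℂ] SampSp S))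
    (hvS : ∀ E : ℝ,
      Tendsto (fun ε : ℝ => -cmp ((E : ℂ) + (ε : ℂ) * I))
        (nhdsWithin 0 (Set.Ioi 0)) (nhds (vS E)))
    (hSP : ∀ E : ℝ, IsUnit (hS + vS E - (E : ℂ) • 1))
    : ∀ (E : ℝ) (ψ : FullSp S m), hv ψ = (E : ℂ) • ψ → ψ = 0 := by
  intro E ψ hψ
  classical
  have hcne : (cR:ℂ) ≠ 0 := by exact_mod_cast hcR.ne'
  set a := prjS ψ with ha
  set b := prjR ψ with hb
  have hψe : emb (a, b) = ψ := rfl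
  have hinj : Function.Injective (emb (S := S) (m := m)) :=
    (WithLp.equiv 2 (SampSp S × LeadSp m)).symm.injective
  have hembadd : ∀ p q : SampSp S × LeadSp m, emb p + emb q = emb (p + q) := by
    intro p q; rfl
  have hembsmul : ∀ (c : ℂ) (p : SampSp S × LeadSp m), c • emb p = emb (c • p) := by
    intro c p; rfl
  -- split the eigenvalue equation into the two components
  have hpair : (hS a + ∑ j : Fin m, (d j : ℂ) • (b (j, 0) • φ j),
      (hR + vR) b + ∑ j : Fin m, (d j : ℂ) • ((inner ℂ (φ j) a : ℂ) • deltaR j 0))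
      = (((E:ℂ) • a : SampSp S), ((E:ℂ) • b : LeadSp m)) := by
    apply hinj
    have step := hψ
    rw [hhv, ContinuousLinearMap.add_apply] at step
    rw [← hψe] at step
    rw [hhD a b, hhT a b] at step
    calc emb (hS a + ∑ j : Fin m, (d j : ℂ) • (b (j, 0) • φ j),
        (hR + vR) b + ∑ j : Fin m, (d j : ℂ) • ((inner ℂ (φ j) a : ℂ) • deltaR j 0))
        = emb (hS a, (hR + vR) b) + emb (∑ j : Fin m, (d j : ℂ) • (b (j, 0) • φ j),
            ∑ j : Fin m, (d j : ℂ) • ((inner ℂ (φ j) a : ℂ) • deltaR j 0)) := rfl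
      _ = (E:ℂ) • emb (a, b) := step
      _ = emb ((E:ℂ) • a, (E:ℂ) • b) := rfl
  have eqS : hS a + ∑ j : Fin m, (d j : ℂ) • (b (j, 0) • φ j) = (E:ℂ) • a :=
    congrArg Prod.fst hpair
  have eqR : (hR + vR) b + ∑ j : Fin m, (d j : ℂ) • ((inner ℂ (φ j) a : ℂ) • deltaR j 0)
      = (E:ℂ) • b := congrArg Prod.snd hpair
  -- componentwise reservoir equations
  have eqR' : ∀ i : Fin m × ℕ, (hR b) i + (vR b) i
      + ∑ j : Fin m, (d j : ℂ) * ((inner ℂ (φ j) a : ℂ) * (deltaR j 0) i) = (E:ℂ) * b i := by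
    intro i
    have h : ((hR + vR) b
        + ∑ j : Fin m, (d j : ℂ) • ((inner ℂ (φ j) a : ℂ) • deltaR j 0)) i
        = (((E:ℂ) • b : LeadSp m)) i := by rw [eqR]
    simp only [ContinuousLinearMap.add_apply, lp.coeFn_add, lp.coeFn_sum, lp.coeFn_smul,
      Pi.add_apply, Finset.sum_apply, Pi.smul_apply, smul_eq_mul] at h
    exact h
  have bdry : ∀ j : Fin m, -(cR:ℂ) * b (j,1) + (v j:ℂ) * b (j,0)
      + (d j:ℂ) * (inner ℂ (φ j) a : ℂ) = (E:ℂ) * b (j,0) := by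
    intro j
    have h := eqR' (j, 0)
    rw [hR0 b j, hvR b j 0] at h
    have hsum : ∑ k : Fin m, (d k:ℂ) * ((inner ℂ (φ k) a : ℂ) * (deltaR k 0) (j,0))
        = (d j:ℂ) * (inner ℂ (φ j) a : ℂ) := by
      rw [Finset.sum_eq_single j]
      · rw [show ((deltaR j 0) (j,0) : ℂ) = 1 from lp.single_apply_self 2 (j,0) 1, mul_one]
      · intro k _ hk
        rw [show ((deltaR k 0) (j,0) : ℂ) = 0 from
          lp.single_apply_ne 2 (k,0) 1 (fun hh => hk (congrArg Prod.fst hh).symm)]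
        ring
      · intro hj; exact absurd (Finset.mem_univ j) hj
    rw [hsum] at h
    linear_combination h
  have intr : ∀ (j : Fin m) (x : ℕ), -(cR:ℂ) * (b (j,x) + b (j,x+2)) + (v j:ℂ) * b (j,x+1)
      = (E:ℂ) * b (j,x+1) := by
    intro j x
    have h := eqR' (j, x+1)
    rw [hR1 b j x, hvR b j (x+1)] at h
    have hsum : ∑ k : Fin m, (d k:ℂ) * ((inner ℂ (φ k) a : ℂ) * (deltaR k 0) (j,x+1)) = 0 := by
      apply Finset.sum_eq_zero
      intro k _
      rw [show ((deltaR k 0) (j,x+1) : ℂ) = 0 from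
        lp.single_apply_ne 2 (k,0) 1 (fun hh => Nat.succ_ne_zero x (congrArg Prod.snd hh))]
      ring
    rw [hsum] at h
    linear_combination h
  set lam : Fin m → ℝ := fun j => (v j - E)/cR with hlam
  have hcast : ∀ j : Fin m, ((v j:ℂ) - (E:ℂ)) = (cR:ℂ) * ((lam j : ℝ):ℂ) := by
    intro j
    rw [hlam]
    push_cast
    field_simp
  have hrecb : ∀ (j : Fin m) (x : ℕ),
      b (j,x) + b (j,x+2) = ((lam j : ℝ):ℂ) * b (j,x+1) := by
    intro j x
    apply mul_left_cancel₀ hcne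
    linear_combination -(intr j x) + b (j,x+1) * hcast j
  have hdec : ∀ j : Fin m, Tendsto (fun x => b (j,x)) atTop (nhds 0) := by
    intro j
    have hmem : Memℓp (⇑b) 2 := lp.memℓp b
    have hsum : Summable fun i : Fin m × ℕ => ‖b i‖ ^ (2:ℝ≥0∞).toReal :=
      (memℓp_gen_iff (by norm_num)).mp hmem
    have hsum2 : Summable fun x : ℕ => ‖b (j, x)‖ ^ (2:ℝ≥0∞).toReal := hsum.prod_factor j
    have h2 : (2:ℝ≥0∞).toReal = 2 := by norm_num
    rw [h2] at hsum2
    have h0 : Tendsto (fun x => ‖b (j,x)‖ ^ (2:ℝ)) atTop (nhds 0) := hsum2.tendsto_atTop_zero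
    have h1 : Tendsto (fun x => ‖b (j,x)‖) atTop (nhds 0) := by
      have hs : Tendsto (fun x => Real.sqrt (‖b (j,x)‖ ^ (2:ℝ))) atTop (nhds (Real.sqrt 0)) :=
        (Real.continuous_sqrt.tendsto _).comp h0
      rw [Real.sqrt_zero] at hs
      refine hs.congr fun x => ?_
      rw [show ((2:ℝ)) = ((2:ℕ):ℝ) from by norm_num, Real.rpow_natCast,
        Real.sqrt_sq (norm_nonneg _)]
    exact tendsto_zero_iff_norm_tendsto_zero.mpr h1
  -- dichotomy for each lead
  have hcase : ∀ j : Fin m,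
      ((d j:ℂ) * (inner ℂ (φ j) a : ℂ) = 0 ∧ ∀ x, b (j,x) = 0) ∨
      (∃ p q : ℝ, p + q = lam j ∧ p * q = 1 ∧ 1 < |q| ∧
        (∀ x, b (j,x+1) = (p:ℂ) * b (j,x)) ∧
        b (j,0) = -((d j:ℂ) * (inner ℂ (φ j) a : ℂ)) * (p:ℂ) / (cR:ℂ)) := by
    intro j
    by_cases hl : |lam j| ≤ 2
    · left
      have hz := band_zero (lam j) hl (fun x => b (j,x)) (fun x => hrecb j x) (hdec j)
      have hz' : ∀ x, b (j,x) = 0 := hz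
      refine ⟨?_, hz'⟩
      have hbd := bdry j
      rw [hz' 0, hz' 1] at hbd
      simpa using hbd
    · right
      push_neg at hl
      obtain ⟨p, q, hpq, hprod, hq⟩ := exists_real_roots (lam j) hl
      have hcast2 : ((lam j : ℝ):ℂ) = (p:ℂ) + (q:ℂ) := by rw [← hpq]; push_cast; ring
      have hprod' : (p:ℂ) * (q:ℂ) = 1 := by norm_cast
      have hqa : 1 < ‖(q:ℂ)‖ := by rw [Complex.norm_real, Real.norm_eq_abs]; exact hq
      have hgeo := geom_of_tendsto (p:ℂ) (q:ℂ) hprod' hqa (fun x => b (j,x))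
        (fun x => by rw [← hcast2]; exact hrecb j x) (hdec j)
      have hgeo' : ∀ x, b (j, x+1) = (p:ℂ) * b (j,x) := hgeo
      refine ⟨p, q, hpq, hprod, hq, hgeo', ?_⟩
      have hbd := bdry j
      rw [show ((j,1) : Fin m × ℕ) = (j, 0+1) from rfl, hgeo' 0] at hbd
      have hqne : (q:ℂ) ≠ 0 := by
        intro h; rw [h, norm_zero] at hqa; linarith
      rw [eq_div_iff hcne]
      apply mul_left_cancel₀ hqne
      linear_combination hbd - b (j,0) * hcast j - (cR:ℂ) * b (j,0) * hcast2
        + ((d j:ℂ) * (inner ℂ (φ j) a : ℂ)) * hprod'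
  -- resolvent applied to delta functions
  have him : ∀ (z : ℂ), z.im ≠ 0 → ∀ k : Fin m, (((v k:ℂ) - z)/(cR:ℂ)).im ≠ 0 := by
    intro z hz k
    rw [Complex.div_im]
    simp only [Complex.ofReal_re, Complex.ofReal_im, Complex.sub_im, Complex.sub_re,
      Complex.normSq_apply, mul_zero, zero_mul, sub_zero, zero_sub, add_zero, zero_div]
    intro hcon
    rw [div_eq_zero_iff] at hcon
    rcases hcon with h | h
    · rcases mul_eq_zero.mp h with h' | h'
      · exact hz (by linarith)
      · exact hcR.ne' h'
    · nlinarith [mul_pos hcR hcR]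
  have hRRδ : ∀ (z : ℂ) (hz : z.im ≠ 0) (k : Fin m),
      RR z (deltaR k 0)
        = leadVec m k (smallRoot (((v k:ℂ) - z)/(cR:ℂ))) cR
            (smallRoot_spec _ (him z hz k)).2 := by
    intro z hz k
    have hmu := smallRoot_spec (((v k:ℂ) - z)/(cR:ℂ)) (him z hz k)
    set r := smallRoot (((v k:ℂ) - z)/(cR:ℂ)) with hrdef
    set g := leadVec m k r cR hmu.2 with hgdef
    have hquad : r * r - (((v k:ℂ) - z)/(cR:ℂ)) * r + 1 = 0 := hmu.1
    have hMrel : ((v k:ℂ) - z) = (cR:ℂ) * (((v k:ℂ) - z)/(cR:ℂ)) := by field_simp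
    have hquad' : (cR:ℂ) * (r*r) - ((v k:ℂ) - z) * r + (cR:ℂ) = 0 := by
      have hc := congrArg (fun t => (cR:ℂ) * t) hquad
      simp only [mul_zero] at hc
      linear_combination hc - r * hMrel
    have hinv : (cR:ℂ) * (cR:ℂ)⁻¹ = 1 := mul_inv_cancel₀ hcne
    have hgapp : ∀ i : Fin m × ℕ, g i = if i.1 = k then r ^ (i.2 + 1) / (cR:ℂ) else 0 :=
      fun i => rfl
    have hg : ((hR + vR) - z • 1) g = deltaR k 0 := by
      have hsplit : ((hR + vR) - z • (1 : LeadSp m →L[ℂ] LeadSp m)) g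
          = hR g + vR g - z • g := by
        rw [ContinuousLinearMap.sub_apply, ContinuousLinearMap.add_apply,
          ContinuousLinearMap.smul_apply, ContinuousLinearMap.one_apply]
      apply lp.ext
      funext i
      obtain ⟨j, x⟩ := i
      rw [hsplit, lp.coeFn_sub, lp.coeFn_add, lp.coeFn_smul]
      simp only [Pi.sub_apply, Pi.add_apply, Pi.smul_apply, smul_eq_mul]
      by_cases hjk : j = k
      · subst hjk
        cases x with
        | zero =>
          rw [hR0 g j, hvR g j 0,
            show ((deltaR j 0) (j,0) : ℂ) = 1 from lp.single_apply_self 2 (j,0) 1,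
            hgapp (j,1), hgapp (j,0)]
          simp only [if_true, eq_self_iff_true, if_pos rfl]
          rw [div_eq_mul_inv, div_eq_mul_inv]
          linear_combination (-(cR:ℂ)⁻¹) * hquad' + hinv
        | succ n =>
          rw [hR1 g j n, hvR g j (n+1),
            show ((deltaR j 0) (j,n+1) : ℂ) = 0 from
              lp.single_apply_ne 2 (j,0) 1 (fun hh => Nat.succ_ne_zero n (congrArg Prod.snd hh)),
            hgapp (j,n), hgapp (j,n+1), hgapp (j,n+2)]
          simp only [if_true, eq_self_iff_true, if_pos rfl]
          rw [div_eq_mul_inv, div_eq_mul_inv, div_eq_mul_inv]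
          linear_combination (-(cR:ℂ)⁻¹ * r^(n+1)) * hquad'
      · have hgj : ∀ y, (g (j,y) : ℂ) = 0 := fun y => by rw [hgapp (j,y)]; simp [hjk]
        have hdz : ((deltaR k 0) (j,x) : ℂ) = 0 :=
          lp.single_apply_ne 2 (k,0) 1 (fun hh => hjk (congrArg Prod.fst hh))
        rw [hdz]
        cases x with
        | zero =>
          rw [hR0 g j, hvR g j 0, hgj 0, hgj 1]
          ring
        | succ n =>
          rw [hR1 g j n, hvR g j (n+1), hgj n, hgj (n+1), hgj (n+2)]
          ring
    have h2 := (hRR z hz).2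
    calc RR z (deltaR k 0) = RR z ((((hR + vR) - z • 1)) g) := by rw [hg]
      _ = ((RR z) * (((hR + vR) - z • 1))) g := rfl
      _ = (1 : LeadSp m →L[ℂ] LeadSp m) g := by rw [h2]
      _ = g := rfl
  -- explicit formula for cmp z a
  have hcmpval : ∀ (z : ℂ) (hz : z.im ≠ 0), cmp z a
      = ∑ j : Fin m, ((d j:ℂ) * ((d j:ℂ) * (inner ℂ (φ j) a : ℂ)
          * smallRoot (((v j:ℂ) - z)/(cR:ℂ)) / (cR:ℂ))) • φ j := by
    intro z hz
    set ρ : Fin m → ℂ := fun j => smallRoot (((v j:ℂ) - z)/(cR:ℂ)) with hρ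
    set gf : Fin m → LeadSp m := fun j =>
      leadVec m j (ρ j) cR (smallRoot_spec _ (him z hz j)).2 with hgf
    have h3 : ∀ j : Fin m, RR z (deltaR j 0) = gf j := fun j => hRRδ z hz j
    have hgv : ∀ (j k : Fin m) (x:ℕ), ((gf k) (j,x) : ℂ)
        = if j = k then (ρ k)^(x+1)/(cR:ℂ) else 0 := fun j k x => rfl
    rw [hcmp z hz a]
    have h1 : hT (emb (a, (0:LeadSp m)))
        = emb (0, ∑ j : Fin m, (d j:ℂ) • ((inner ℂ (φ j) a : ℂ) • deltaR j 0)) := by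
      rw [hhT a 0]
      have hz0 : ∑ j : Fin m, (d j:ℂ) • (((0:LeadSp m) (j,0) : ℂ) • φ j) = (0:SampSp S) :=
        Finset.sum_eq_zero fun j _ => by
          rw [show ((0:LeadSp m) (j,0) : ℂ) = 0 from rfl, zero_smul, smul_zero]
      rw [hz0]
    rw [h1]
    have h2 : RR z (prjR (emb ((0:SampSp S),
        ∑ j : Fin m, (d j:ℂ) • ((inner ℂ (φ j) a : ℂ) • deltaR j 0))))
        = ∑ j : Fin m, (d j:ℂ) • ((inner ℂ (φ j) a : ℂ) • gf j) := by
      rw [show prjR (emb ((0:SampSp S),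
          ∑ j : Fin m, (d j:ℂ) • ((inner ℂ (φ j) a : ℂ) • deltaR j 0)))
          = ∑ j : Fin m, (d j:ℂ) • ((inner ℂ (φ j) a : ℂ) • deltaR j 0) from rfl]
      rw [map_sum]
      exact Finset.sum_congr rfl fun j _ => by rw [_root_.map_smul, _root_.map_smul, h3 j]
    rw [h2, hhT 0 _]
    rw [show ∀ p : SampSp S × LeadSp m, prjS (emb p) = p.1 from fun p => rfl]
    dsimp only
    apply Finset.sum_congr rfl
    intro j _
    have hW : ((∑ k : Fin m, (d k:ℂ) • ((inner ℂ (φ k) a : ℂ) • gf k)) (j,0) : ℂ)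
        = (d j:ℂ) * ((inner ℂ (φ j) a : ℂ) * ((ρ j)/(cR:ℂ))) := by
      rw [lp.coeFn_sum, Finset.sum_apply]
      rw [Finset.sum_eq_single j]
      · rw [lp.coeFn_smul, Pi.smul_apply, lp.coeFn_smul, Pi.smul_apply, smul_eq_mul,
          smul_eq_mul, hgv j j 0, if_pos rfl, pow_one]
      · intro k _ hk
        rw [lp.coeFn_smul, Pi.smul_apply, lp.coeFn_smul, Pi.smul_apply, smul_eq_mul,
          smul_eq_mul, hgv j k 0, if_neg (fun hh => hk hh.symm)]
        ring
      · intro hj; exact absurd (Finset.mem_univ j) hj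
    rw [hW, smul_smul]
    congr 1
    simp only [hρ]
    ring
  have himε : ∀ ε : ℝ, ε ∈ Set.Ioi (0:ℝ) → ((E:ℂ) + (ε:ℂ) * I).im ≠ 0 := by
    intro ε hε
    simp [Complex.add_im, Complex.mul_im]
    exact ne_of_gt hε
  -- identification of vS E a
  have hvSa : vS E a = ∑ j : Fin m, ((d j:ℂ) * b (j,0)) • φ j := by
    have h1 : Tendsto (fun ε : ℝ => (-cmp ((E:ℂ) + (ε:ℂ) * I)) a)
        (nhdsWithin 0 (Set.Ioi 0)) (nhds (vS E a)) :=
      ((ContinuousLinearMap.apply ℂ (SampSp S) a).continuous.tendsto (vS E)).comp (hvS E)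
    have h2 : Tendsto (fun ε : ℝ => (-cmp ((E:ℂ) + (ε:ℂ) * I)) a)
        (nhdsWithin 0 (Set.Ioi 0)) (nhds (∑ j : Fin m, ((d j:ℂ) * b (j,0)) • φ j)) := by
      have hev : ∀ᶠ (ε : ℝ) in nhdsWithin (0:ℝ) (Set.Ioi (0:ℝ)),
          (∑ j : Fin m, (-((d j:ℂ) * ((d j:ℂ) * (inner ℂ (φ j) a : ℂ)
            * smallRoot (((v j:ℂ) - ((E:ℂ) + (ε:ℂ) * I))/(cR:ℂ)) / (cR:ℂ)))) • φ j)
          = (-cmp ((E:ℂ) + (ε:ℂ) * I)) a := by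
        filter_upwards [self_mem_nhdsWithin] with ε hε
        rw [ContinuousLinearMap.neg_apply, hcmpval _ (himε ε hε),
          ← Finset.sum_neg_distrib]
        exact Finset.sum_congr rfl fun j _ => by rw [neg_smul]
      refine Tendsto.congr' hev ?_
      apply tendsto_finset_sum
      intro j _
      rcases hcase j with ⟨hd0, hb0⟩ | ⟨p, q, hpq, hprod, hq, hgeo, hu0⟩
      · have hbz0 : ((d j:ℂ) * b (j,0)) = 0 := by rw [hb0 0, mul_zero]
        rw [hbz0, zero_smul]
        refine Tendsto.congr (fun ε => ?_) tendsto_const_nhds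
        have hc0 : -((d j:ℂ) * ((d j:ℂ) * (inner ℂ (φ j) a : ℂ)
            * smallRoot (((v j:ℂ) - ((E:ℂ) + (ε:ℂ) * I))/(cR:ℂ)) / (cR:ℂ))) = 0 := by
          calc -((d j:ℂ) * ((d j:ℂ) * (inner ℂ (φ j) a : ℂ)
                * smallRoot (((v j:ℂ) - ((E:ℂ) + (ε:ℂ) * I))/(cR:ℂ)) / (cR:ℂ)))
              = -(((d j:ℂ) * (inner ℂ (φ j) a : ℂ)) * ((d j:ℂ)
                * smallRoot (((v j:ℂ) - ((E:ℂ) + (ε:ℂ) * I))/(cR:ℂ)) / (cR:ℂ))) := by ring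
            _ = 0 := by rw [hd0, zero_mul, neg_zero]
        rw [hc0, zero_smul]
      · have hroot : Tendsto (fun ε:ℝ =>
            smallRoot (((v j:ℂ) - ((E:ℂ) + (ε:ℂ) * I))/(cR:ℂ)))
            (nhdsWithin 0 (Set.Ioi 0)) (nhds ((p:ℝ):ℂ)) := by
          rw [tendsto_iff_dist_tendsto_zero]
          apply squeeze_zero' (Eventually.of_forall fun ε => dist_nonneg)
            (g := fun ε:ℝ => (ε/cR)/(|q|-1)) ?_ ?_
          · filter_upwards [self_mem_nhdsWithin] with ε hε
            have hspec := smallRoot_spec (((v j:ℂ) - ((E:ℂ) + (ε:ℂ) * I))/(cR:ℂ))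
              (him _ (himε ε hε) j)
            have hclose := small_root_close (lam j) p q hpq hprod hq
              (((v j:ℂ) - ((E:ℂ) + (ε:ℂ) * I))/(cR:ℂ)) _ hspec.1 hspec.2
            have hdiff : (((v j:ℂ) - ((E:ℂ) + (ε:ℂ) * I))/(cR:ℂ)) - ((lam j:ℝ):ℂ)
                = -((ε:ℂ) * I)/(cR:ℂ) := by
              rw [hlam]
              push_cast
              ring
            have habs : ‖(((v j:ℂ) - ((E:ℂ) + (ε:ℂ) * I))/(cR:ℂ))
                - ((lam j:ℝ):ℂ)‖ = ε/cR := by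
              rw [hdiff, norm_div, norm_neg, norm_mul, Complex.norm_real,
                Complex.norm_I, Complex.norm_real, mul_one, Real.norm_eq_abs, Real.norm_eq_abs, abs_of_pos hε, abs_of_pos hcR]
            rw [Complex.dist_eq]
            calc ‖smallRoot (((v j:ℂ) - ((E:ℂ) + (ε:ℂ) * I))/(cR:ℂ)) - ((p:ℝ):ℂ)‖
                ≤ ‖(((v j:ℂ) - ((E:ℂ) + (ε:ℂ) * I))/(cR:ℂ)) - ((lam j:ℝ):ℂ)‖
                  / (|q| - 1) := hclose
              _ = (ε/cR)/(|q|-1) := by rw [habs]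
          · have hb : Tendsto (fun ε:ℝ => (ε/cR)/(|q|-1)) (nhds 0)
                (nhds (((0:ℝ)/cR)/(|q|-1))) :=
              (tendsto_id.div_const cR).div_const (|q|-1)
            simp only [zero_div] at hb
            exact hb.mono_left nhdsWithin_le_nhds
        have hlim : -((d j:ℂ) * ((d j:ℂ) * (inner ℂ (φ j) a : ℂ) * ((p:ℝ):ℂ) / (cR:ℂ)))
            = (d j:ℂ) * b (j,0) := by
          rw [hu0]; ring
        rw [show ((d j:ℂ) * b (j,0)) • φ j
            = (-((d j:ℂ) * ((d j:ℂ) * (inner ℂ (φ j) a:ℂ) * ((p:ℝ):ℂ)/(cR:ℂ)))) • φ j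
            from by rw [hlim]]
        exact Tendsto.smul_const (by
          exact ((((hroot.const_mul ((d j:ℂ) * (inner ℂ (φ j) a : ℂ))).div_const
            (cR:ℂ)).const_mul ((d j:ℂ))).neg)) (φ j)
    exact tendsto_nhds_unique h1 h2
  -- the sample component vanishes
  have hMa : (hS + vS E - (E:ℂ) • 1) a = 0 := by
    rw [ContinuousLinearMap.sub_apply, ContinuousLinearMap.add_apply,
      ContinuousLinearMap.smul_apply, ContinuousLinearMap.one_apply, hvSa, sub_eq_zero]
    rw [← eqS]
    congr 1
    apply Finset.sum_congr rfl
    intro j _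
    rw [smul_smul]
  have ha0 : a = 0 := by
    obtain ⟨u, hu⟩ := hSP E
    have h1 : (↑u⁻¹ : SampSp S →L[ℂ] SampSp S) * (hS + vS E - (E:ℂ) • 1) = 1 := by
      rw [← hu]; exact u.inv_mul
    calc a = (1 : SampSp S →L[ℂ] SampSp S) a := rfl
      _ = ((↑u⁻¹ : SampSp S →L[ℂ] SampSp S) * (hS + vS E - (E:ℂ) • 1)) a := by rw [h1]
      _ = (↑u⁻¹ : SampSp S →L[ℂ] SampSp S) ((hS + vS E - (E:ℂ) • 1) a) := rfl
      _ = 0 := by rw [hMa]; exact map_zero _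
  -- hence the reservoir component vanishes
  have hbz : ∀ (j : Fin m) (x : ℕ), b (j,x) = 0 := by
    intro j x
    have hia : (inner ℂ (φ j) a : ℂ) = 0 := by rw [ha0]; exact inner_zero_right _
    rcases hcase j with ⟨_, hb0⟩ | ⟨p, q, hpq, hprod, hq, hgeo, hu0⟩
    · exact hb0 x
    · have h0 : b (j,0) = 0 := by rw [hu0, hia]; ring
      induction x with
      | zero => exact h0
      | succ n ih => rw [hgeo n, ih, mul_zero]
  have hbzero : b = 0 := by
    apply lp.ext
    funext i
    obtain ⟨j, x⟩ := i
    rw [hbz j x]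
    rfl
  rw [← hψe, ha0, hbzero]
  rfl
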